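/- arXiv:2012.14222 — 3 statements merged into one kernel-verified Lean document; each statement's English description precedes it below -/
import Mathlib

section
/- Let γ : [0,1] → ℝ⁴ \ {0} be a smooth curve which is the lift of a convex curve in ℝP³, i.e., for every nonzero linear functional f on ℝ⁴ the sum of the orders of vanishing of f∘γ over its zeros in [0,1] is at most 3. Then for any 0 < s₁ < s₂ < s₃ < s₄ < 1 there exist an invertible linear map g ∈ GL₄(ℝ) and, for each i = 1,…,4, two vectors uᵢ, vᵢ spanning the 2-dimensional subspace span{γ(sᵢ), γ′(sᵢ)}, such that the 4×8 real matrix with columns g·u₁, g·v₁, g·u₂, g·v₂, g·u₃, g·v₃, g·u₄, g·v₄ has all of its 4×4 minors strictly positive. -/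
open Matrix Filter Set

def half (k : Fin 8) : Fin 4 := ⟨k.val / 2, Nat.div_lt_of_lt_mul k.isLt⟩

/-- one row operation: subtract `x`-row and factor `e` -/
lemma det_pair_sub (R : Fin 4 → Fin 4 → ℝ) {k j' : Fin 4} (hkj : j' ≠ k)
    (x y : Fin 4 → ℝ) (e : ℝ) (hk : R k = x + e • y) (hj : R j' = x) :
    (Matrix.of R).det = e * (Matrix.of (Function.update R k y)).det := by
  have h1 : Matrix.of R = (Matrix.of R).updateRow k (x + e • y) := by
    rw [← hk]; exact (Matrix.updateRow_eq_self _ _).symm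
  have h0 : ((Matrix.of R).updateRow k x).det = 0 := by
    refine Matrix.det_zero_of_row_eq hkj ?_
    simp [Matrix.updateRow_apply, hkj]; exact hj
  have h2 : (Matrix.of R).updateRow k y = Matrix.of (Function.update R k y) := by
    ext i j
    by_cases hik : i = k
    · subst hik; simp
    · simp [Matrix.updateRow_apply, hik, Function.update_apply]
  rw [h1, Matrix.det_updateRow_add, Matrix.det_updateRow_smul, h0, h2]
  ring

lemma det_factor (x y : Fin 4 → Fin 4 → ℝ) (π : Fin 4 → Fin 4) (b d : Fin 4 → Bool)
    (hdb : ∀ j, d j = true → b j = true)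
    (hpartner : ∀ j, d j = true → ∃ j', π j' = π j ∧ b j' = false)
    (e : ℝ) :
    (Matrix.of fun j => if b j then x (π j) + e • y (π j) else x (π j)).det
      = e ^ (Finset.univ.filter fun j => d j = true).card *
        (Matrix.of fun j =>
          if d j then y (π j) else if b j then x (π j) + e • y (π j) else x (π j)).det := by
  suffices H : ∀ Q : Finset (Fin 4), (∀ j ∈ Q, d j = true) →
      (Matrix.of fun j => if b j then x (π j) + e • y (π j) else x (π j)).det
        = e ^ Q.card * (Matrix.of fun j =>
            if j ∈ Q then y (π j) else if b j then x (π j) + e • y (π j) else x (π j)).det by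
    have key := H (Finset.univ.filter fun j => d j = true) (by intro j hj; simpa using hj)
    rw [key]
    congr 2
    funext j
    by_cases hd : d j = true
    · simp [hd]
    · simp [hd]
  intro Q
  induction Q using Finset.induction_on with
  | empty => intro _; simp
  | @insert a Q ha IH =>
    intro hins
    have hQ : ∀ j ∈ Q, d j = true := fun j hj => hins j (Finset.mem_insert_of_mem hj)
    have hda : d a = true := hins a (Finset.mem_insert_self a Q)
    rw [IH hQ]
    obtain ⟨j', hπ, hbj'⟩ := hpartner a hda
    have hdj' : d j' = false := by
      cases hdj : d j' with
      | false => rfl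
      | true => rw [hdb j' hdj] at hbj'; exact absurd hbj' (by simp)
    have hj'Q : j' ∉ Q := fun h => by rw [hQ j' h] at hdj'; exact absurd hdj' (by simp)
    have hj'a : j' ≠ a := fun h => by rw [h, hda] at hdj'; exact absurd hdj' (by simp)
    have hstep := det_pair_sub
      (fun j => if j ∈ Q then y (π j) else if b j then x (π j) + e • y (π j) else x (π j))
      hj'a (x (π a)) (y (π a)) e
      (by simp only [if_neg ha, hdb a hda, if_pos])
      (by simp only [if_neg hj'Q, hbj', Bool.false_eq_true, if_neg, if_false, hπ])
    rw [hstep]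
    have hupd : (Function.update
        (fun j => if j ∈ Q then y (π j) else if b j then x (π j) + e • y (π j) else x (π j)) a
        (y (π a)))
        = fun j => if j ∈ insert a Q then y (π j)
            else if b j then x (π j) + e • y (π j) else x (π j) := by
      funext j
      by_cases hja : j = a
      · subst hja; simp
      · simp [Function.update_apply, hja, Finset.mem_insert]
    rw [hupd, Finset.card_insert_of_notMem ha]
    ring

section Key
variable (γ : ℝ → (Fin 4 → ℝ))

/-- multiplicity bound contradiction -/
lemma keyA
    (hconv : ∀ f : (Fin 4 → ℝ) →ₗ[ℝ] ℝ, f ≠ 0 →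
      (∀ t ∈ Set.Icc (0:ℝ) 1, ∃ k : ℕ, iteratedDeriv k (fun u => f (γ u)) t ≠ 0) ∧
      ∀ (S : Finset ℝ) (ord : ℝ → ℕ),
        (∀ t ∈ S, t ∈ Set.Icc (0:ℝ) 1 ∧ 1 ≤ ord t ∧
          iteratedDeriv (ord t) (fun u => f (γ u)) t ≠ 0 ∧
          ∀ j < ord t, iteratedDeriv j (fun u => f (γ u)) t = 0) →
        ∑ t ∈ S, ord t ≤ 3)
    (f : (Fin 4 → ℝ) →ₗ[ℝ] ℝ) (hf : f ≠ 0) (T : Finset ℝ) (m : ℝ → ℕ)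
    (hT : ∀ t ∈ T, t ∈ Set.Icc (0:ℝ) 1 ∧ 1 ≤ m t ∧
      ∀ j < m t, iteratedDeriv j (fun u => f (γ u)) t = 0)
    (hsum : 4 ≤ ∑ t ∈ T, m t) : False := by
  obtain ⟨hex, hbound⟩ := hconv f hf
  classical
  set ord : ℝ → ℕ := fun t =>
    if h : t ∈ Set.Icc (0:ℝ) 1 then Nat.find (hex t h) else 0 with hord
  have hordspec : ∀ t ∈ T, iteratedDeriv (ord t) (fun u => f (γ u)) t ≠ 0 := by
    intro t ht
    have h := (hT t ht).1
    simp only [hord, dif_pos h]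
    exact Nat.find_spec (hex t h)
  have hordmin : ∀ t ∈ T, ∀ j < ord t, iteratedDeriv j (fun u => f (γ u)) t = 0 := by
    intro t ht j hj
    have h := (hT t ht).1
    simp only [hord, dif_pos h] at hj
    have := Nat.find_min (hex t h) hj
    simpa using this
  have hge : ∀ t ∈ T, m t ≤ ord t := by
    intro t ht
    by_contra hlt
    push_neg at hlt
    exact hordspec t ht ((hT t ht).2.2 _ hlt)
  have h1 : ∀ t ∈ T, 1 ≤ ord t := fun t ht => le_trans (hT t ht).2.1 (hge t ht)
  have hb := hbound T ord (fun t ht =>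
    ⟨(hT t ht).1, h1 t ht, hordspec t ht, hordmin t ht⟩)
  have := Finset.sum_le_sum hge
  omega

lemma exists_functional (R : Fin 4 → Fin 4 → ℝ) (h : (Matrix.of R).det = 0) :
    ∃ f : (Fin 4 → ℝ) →ₗ[ℝ] ℝ, f ≠ 0 ∧ ∀ j, f (R j) = 0 := by
  obtain ⟨v, hv0, hv⟩ := (Matrix.exists_mulVec_eq_zero_iff).mpr h
  refine ⟨∑ i, v i • (LinearMap.proj i : ((Fin 4 → ℝ) →ₗ[ℝ] ℝ)), ?_, ?_⟩
  · obtain ⟨i, hi⟩ := Function.ne_iff.mp hv0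
    intro hzero
    apply hi
    have := LinearMap.congr_fun hzero (Pi.single i 1)
    simpa [LinearMap.sum_apply, Pi.single_apply, Finset.sum_ite_eq'] using this
  · intro j
    have := congr_fun hv j
    simp only [Matrix.mulVec, dotProduct, Pi.zero_apply] at this
    simp only [LinearMap.sum_apply, LinearMap.smul_apply, LinearMap.proj_apply,
      smul_eq_mul]
    rw [← this]
    exact Finset.sum_congr rfl fun i _ => mul_comm _ _

lemma deriv_comp_lin (hsmooth : ContDiff ℝ (⊤ : ℕ∞) γ)
    (f : (Fin 4 → ℝ) →ₗ[ℝ] ℝ) (t : ℝ) :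
    iteratedDeriv 1 (fun u => f (γ u)) t = f (deriv γ t) := by
  rw [iteratedDeriv_one]
  have hγ : HasDerivAt γ (deriv γ t) t :=
    ((hsmooth.differentiable (by simp)) t).hasDerivAt
  have hc := (LinearMap.toContinuousLinearMap f).hasFDerivAt.comp_hasDerivAt t hγ
  have heq2 : (fun u => f (γ u))
      = (⇑(LinearMap.toContinuousLinearMap f) ∘ γ) := by
    funext u; simp [Function.comp]
  rw [heq2, hc.deriv]
  simp

/-- confluent determinants are nonzero -/
lemma conf_ne (hsmooth : ContDiff ℝ (⊤ : ℕ∞) γ)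
    (hconv : ∀ f : (Fin 4 → ℝ) →ₗ[ℝ] ℝ, f ≠ 0 →
      (∀ t ∈ Set.Icc (0:ℝ) 1, ∃ k : ℕ, iteratedDeriv k (fun u => f (γ u)) t ≠ 0) ∧
      ∀ (S : Finset ℝ) (ord : ℝ → ℕ),
        (∀ t ∈ S, t ∈ Set.Icc (0:ℝ) 1 ∧ 1 ≤ ord t ∧
          iteratedDeriv (ord t) (fun u => f (γ u)) t ≠ 0 ∧
          ∀ j < ord t, iteratedDeriv j (fun u => f (γ u)) t = 0) →
        ∑ t ∈ S, ord t ≤ 3)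
    (t : Fin 4 → ℝ) (ht : ∀ j, t j ∈ Set.Icc (0:ℝ) 1)
    (d : Fin 4 → Bool) (hinj : Function.Injective fun j => (t j, d j))
    (hpartner : ∀ j, d j = true → ∃ j', t j' = t j ∧ d j' = false) :
    (Matrix.of fun j => if d j then deriv γ (t j) else γ (t j)).det ≠ 0 := by
  classical
  intro h0
  obtain ⟨f, hf, hfr⟩ := exists_functional _ h0
  set m : ℝ → ℕ := fun τ => (Finset.univ.filter fun j => t j = τ).card with hm
  have hsum : ∑ τ ∈ Finset.univ.image t, m τ = 4 := by
    have := Finset.card_eq_sum_card_image t (Finset.univ : Finset (Fin 4))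
    simp only [Finset.card_univ, Fintype.card_fin] at this
    exact this.symm
  refine keyA γ hconv f hf (Finset.univ.image t) m ?_ (by omega)
  intro τ hτ
  obtain ⟨j0, _, hj0⟩ := Finset.mem_image.mp hτ
  refine ⟨hj0 ▸ ht j0, ?_, ?_⟩
  · have hmem : j0 ∈ Finset.univ.filter fun j => t j = τ := by simp [hj0]
    have hpos := Finset.card_pos.mpr ⟨j0, hmem⟩
    rw [hm]
    exact hpos
  · -- fiber cardinality ≤ 2
    have hcard2 : m τ ≤ 2 := by
      have : (Finset.univ.filter fun j => t j = τ).card ≤ (Finset.univ : Finset Bool).card := by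
        apply Finset.card_le_card_of_injOn d (fun _ _ => Finset.mem_univ _)
        intro a ha b hb hab
        simp only [Finset.mem_coe, Finset.mem_filter] at ha hb
        apply hinj
        show (t a, d a) = (t b, d b)
        rw [ha.2, hb.2, hab]
      simpa using this
    have hlow : ∃ j, t j = τ ∧ d j = false := by
      cases hd : d j0 with
      | false => exact ⟨j0, hj0, hd⟩
      | true =>
        obtain ⟨j', hj', hd'⟩ := hpartner j0 hd
        exact ⟨j', hj'.trans hj0, hd'⟩
    obtain ⟨ja, hja, hda⟩ := hlow
    have hval0 : f (γ τ) = 0 := by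
      have := hfr ja
      rw [hda] at this
      simpa [hja] using this
    intro k hk
    have hk2 : k < 2 := lt_of_lt_of_le hk hcard2
    interval_cases k
    · rw [iteratedDeriv_zero]; exact hval0
    · -- m τ = 2 : there is a `true` row
      have h2 : 1 < m τ := hk
      rw [hm] at h2
      obtain ⟨a, ha, bb, hbmem, hab⟩ := Finset.one_lt_card.mp h2
      simp only [Finset.mem_filter, Finset.mem_univ, true_and] at ha hbmem
      have hdiff : d a ≠ d bb := by
        intro hsame
        refine hab (hinj ?_)
        show (t a, d a) = (t bb, d bb)
        rw [ha, hbmem, hsame]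
      have htrue : ∃ jb, t jb = τ ∧ d jb = true := by
        cases hda' : d a with
        | true => exact ⟨a, ha, hda'⟩
        | false =>
          cases hdb' : d bb with
          | true => exact ⟨bb, hbmem, hdb'⟩
          | false => rw [hda', hdb'] at hdiff; exact absurd rfl hdiff
      obtain ⟨jb, hjb, hdbtrue⟩ := htrue
      have hval1 : f (deriv γ τ) = 0 := by
        have := hfr jb
        rw [hdbtrue] at this
        simpa [hjb] using this
      rw [deriv_comp_lin γ hsmooth f τ]
      exact hval1

end Key

section Sign
variable (γ : ℝ → (Fin 4 → ℝ)) (s : Fin 4 → ℝ)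

/-- determinant at 4 distinct ordered points has constant sign -/
lemma D_pos (hsmooth : ContDiff ℝ (⊤ : ℕ∞) γ)
    (hconv : ∀ f : (Fin 4 → ℝ) →ₗ[ℝ] ℝ, f ≠ 0 →
      (∀ t ∈ Set.Icc (0:ℝ) 1, ∃ k : ℕ, iteratedDeriv k (fun u => f (γ u)) t ≠ 0) ∧
      ∀ (S : Finset ℝ) (ord : ℝ → ℕ),
        (∀ t ∈ S, t ∈ Set.Icc (0:ℝ) 1 ∧ 1 ≤ ord t ∧
          iteratedDeriv (ord t) (fun u => f (γ u)) t ≠ 0 ∧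
          ∀ j < ord t, iteratedDeriv j (fun u => f (γ u)) t = 0) →
        ∑ t ∈ S, ord t ≤ 3)
    (hs : StrictMono s) (hsI : ∀ i, s i ∈ Set.Icc (0:ℝ) 1)
    (t : Fin 4 → ℝ) (htm : StrictMono t) (htI : ∀ i, t i ∈ Set.Icc (0:ℝ) 1) :
    0 < (Matrix.of fun j => γ (s j)).det * (Matrix.of fun j => γ (t j)).det := by
  classical
  set U : Set (Fin 4 → ℝ) := {r | StrictMono r ∧ ∀ i, r i ∈ Set.Icc (0:ℝ) 1} with hU
  have hne0 : ∀ r ∈ U, (Matrix.of fun j => γ (r j)).det ≠ 0 := by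
    intro r hr
    have h := conf_ne γ hsmooth hconv r hr.2 (fun _ => false)
      (fun a b hab => hr.1.injective (congrArg Prod.fst hab))
      (fun j hj => by simp at hj)
    simpa using h
  have hUconv : Convex ℝ U := by
    intro p hp q hq α β hα hβ hαβ
    constructor
    · intro i j hij
      have h1 : p i < p j := hp.1 hij
      have h2 : q i < q j := hq.1 hij
      show α * p i + β * q i < α * p j + β * q j
      rcases eq_or_lt_of_le hα with hα0 | hα0
      · have hβ1 : β = 1 := by linarith
        rw [← hα0, hβ1]; simpa using h2
      · have := mul_lt_mul_of_pos_left h1 hα0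
        have := mul_le_mul_of_nonneg_left h2.le hβ
        linarith
    · intro i
      have h1 := hp.2 i
      have h2 := hq.2 i
      simp only [Set.mem_Icc] at h1 h2 ⊢
      constructor
      · have := mul_le_mul_of_nonneg_left h1.1 hα
        have := mul_le_mul_of_nonneg_left h2.1 hβ
        show 0 ≤ α * p i + β * q i
        nlinarith
      · show α * p i + β * q i ≤ 1
        nlinarith [mul_le_mul_of_nonneg_left h1.2 hα, mul_le_mul_of_nonneg_left h2.2 hβ]
  have hcont : ContinuousOn (fun r : Fin 4 → ℝ => (Matrix.of fun j => γ (r j)).det) U := by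
    apply Continuous.continuousOn
    apply Continuous.matrix_det
    apply continuous_pi
    intro j
    apply continuous_pi
    intro i
    exact (continuous_apply i).comp (hsmooth.continuous.comp (continuous_apply j))
  have hsU : s ∈ U := ⟨hs, hsI⟩
  have htU : t ∈ U := ⟨htm, htI⟩
  set Ds := (Matrix.of fun j => γ (s j)).det with hDs
  set Dt := (Matrix.of fun j => γ (t j)).det with hDt
  by_contra hcon
  push_neg at hcon
  have hDs0 := hne0 s hsU
  have hDt0 := hne0 t htU
  have hneg : Ds * Dt < 0 :=
    lt_of_le_of_ne hcon (mul_ne_zero hDs0 hDt0)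
  have hmid : ∃ r ∈ U, (Matrix.of fun j => γ (r j)).det = 0 := by
    rcases mul_neg_iff.mp hneg with ⟨h1, h2⟩ | ⟨h1, h2⟩
    · have := (hUconv.isPreconnected.intermediate_value htU hsU hcont)
        (show (0:ℝ) ∈ Set.Icc Dt Ds from ⟨h2.le, h1.le⟩)
      obtain ⟨r, hr, hr0⟩ := this
      exact ⟨r, hr, hr0⟩
    · have := (hUconv.isPreconnected.intermediate_value hsU htU hcont)
        (show (0:ℝ) ∈ Set.Icc Ds Dt from ⟨h1.le, h2.le⟩)
      obtain ⟨r, hr, hr0⟩ := this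
      exact ⟨r, hr, hr0⟩
  obtain ⟨r, hr, hr0⟩ := hmid
  exact hne0 r hr hr0

end Sign

section B0
variable (γ : ℝ → (Fin 4 → ℝ)) (s : Fin 4 → ℝ)

lemma B0_pos (hsmooth : ContDiff ℝ (⊤ : ℕ∞) γ)
    (hconv : ∀ f : (Fin 4 → ℝ) →ₗ[ℝ] ℝ, f ≠ 0 →
      (∀ t ∈ Set.Icc (0:ℝ) 1, ∃ k : ℕ, iteratedDeriv k (fun u => f (γ u)) t ≠ 0) ∧
      ∀ (S : Finset ℝ) (ord : ℝ → ℕ),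
        (∀ t ∈ S, t ∈ Set.Icc (0:ℝ) 1 ∧ 1 ≤ ord t ∧
          iteratedDeriv (ord t) (fun u => f (γ u)) t ≠ 0 ∧
          ∀ j < ord t, iteratedDeriv j (fun u => f (γ u)) t = 0) →
        ∑ t ∈ S, ord t ≤ 3)
    (hs : StrictMono s) (hs0 : 0 < s 0) (hs1 : s 3 < 1)
    (π : Fin 4 → Fin 4) (pr : Fin 4 → Bool)
    (hlex : ∀ j j', j < j' → π j < π j' ∨ (π j = π j' ∧ pr j = false ∧ pr j' = true))
    (hpartner : ∀ j, pr j = true → ∃ j', π j' = π j ∧ pr j' = false) :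
    0 < (Matrix.of fun j => γ (s j)).det *
      (Matrix.of fun j => if pr j then deriv γ (s (π j)) else γ (s (π j))).det := by
  classical
  have hsI : ∀ i, s i ∈ Set.Icc (0:ℝ) 1 := by
    intro i
    constructor
    · exact (hs0.trans_le (hs.monotone (Fin.zero_le i))).le
    · exact ((hs.monotone (Fin.le_last i)).trans_lt hs1).le
  set Ds := (Matrix.of fun j => γ (s j)).det with hDs
  have hDs0 : Ds ≠ 0 := by
    intro h
    have := D_pos γ s hsmooth hconv hs hsI s hs hsI
    rw [← hDs] at this
    nlinarith
  -- minimal gap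
  set gap : ℝ := min (min (s 1 - s 0) (s 2 - s 1)) (min (s 3 - s 2) (1 - s 3)) with hgapdef
  have m01 : s 0 < s 1 := hs (by decide)
  have m12 : s 1 < s 2 := hs (by decide)
  have m23 : s 2 < s 3 := hs (by decide)
  have hgap : 0 < gap := by
    apply lt_min (lt_min (by linarith) (by linarith)) (lt_min (by linarith) (by linarith))
  have g01 : gap ≤ s 1 - s 0 := (min_le_left _ _).trans (min_le_left _ _)
  have g12 : gap ≤ s 2 - s 1 := (min_le_left _ _).trans (min_le_right _ _)
  have g23 : gap ≤ s 3 - s 2 := (min_le_right _ _).trans (min_le_left _ _)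
  have g3 : gap ≤ 1 - s 3 := (min_le_right _ _).trans (min_le_right _ _)
  have hkey : ∀ a b : Fin 4, a.val + 1 = b.val → gap ≤ s b - s a := by
    intro a b hab
    have hcases : (a.val = 0 ∧ b.val = 1) ∨ (a.val = 1 ∧ b.val = 2) ∨
        (a.val = 2 ∧ b.val = 3) := by
      have := a.isLt; have := b.isLt; omega
    rcases hcases with ⟨ha, hb⟩ | ⟨ha, hb⟩ | ⟨ha, hb⟩
    · have ha' : a = 0 := Fin.ext (by simpa using ha)
      have hb' : b = 1 := Fin.ext (by simpa using hb)
      rw [ha', hb']; linarith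
    · have ha' : a = 1 := Fin.ext (by simpa using ha)
      have hb' : b = 2 := Fin.ext (by simpa using hb)
      rw [ha', hb']; linarith
    · have ha' : a = 2 := Fin.ext (by simpa using ha)
      have hb' : b = 3 := Fin.ext (by simpa using hb)
      rw [ha', hb']; linarith
  have hstep : ∀ i i' : Fin 4, i < i' → s i + gap ≤ s i' := by
    intro i i' h
    have hlt : i.val < i'.val := h
    have h4 : i.val + 1 < 4 := by have := i'.isLt; omega
    set c : Fin 4 := ⟨i.val + 1, h4⟩ with hc
    have hk := hkey i c rfl
    have hcb : s c ≤ s i' := hs.monotone (by rw [Fin.le_def]; simp [hc]; omega)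
    linarith
  -- number of derivative rows
  set p : ℕ := (Finset.univ.filter fun j => pr j = true).card with hp
  -- the slope matrices
  have h1 : ∀ δ : ℝ, 0 < δ → δ < gap →
      0 < Ds * (Matrix.of fun j => if pr j then
        δ⁻¹ • (γ (s (π j) + δ) - γ (s (π j))) else γ (s (π j))).det := by
    intro δ hδ hδgap
    set τ : Fin 4 → ℝ := fun j => s (π j) + (if pr j then δ else 0) with hτ
    have hτm : StrictMono τ := by
      intro j j' hjj'
      rcases hlex j j' hjj' with hππ | ⟨hππ, hprj, hprj'⟩
      · have := hstep _ _ hππ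
        simp only [hτ]
        split_ifs <;> linarith
      · simp only [hτ, hprj, hprj', if_true, if_false]
        rw [hππ]
        simp [hδ]
    have hτI : ∀ j, τ j ∈ Set.Icc (0:ℝ) 1 := by
      intro j
      have h1 := (hsI (π j)).1
      have h2 : s (π j) ≤ s 3 := hs.monotone (Fin.le_last _)
      simp only [hτ, Set.mem_Icc]
      split_ifs <;> constructor <;> linarith
    have hD := D_pos γ s hsmooth hconv hs hsI τ hτm hτI
    have hid : (Matrix.of fun j => γ (τ j)).det
        = δ ^ p * (Matrix.of fun j => if pr j then
            δ⁻¹ • (γ (s (π j) + δ) - γ (s (π j))) else γ (s (π j))).det := by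
      have hfac := det_factor (fun i => γ (s i))
        (fun i => δ⁻¹ • (γ (s i + δ) - γ (s i))) π pr pr
        (fun j h => h) hpartner δ
      have hL : (Matrix.of fun j => γ (τ j))
          = (Matrix.of fun j => if pr j then
              γ (s (π j)) + δ • (δ⁻¹ • (γ (s (π j) + δ) - γ (s (π j)))) else γ (s (π j))) := by
        ext j i
        simp only [Matrix.of_apply, hτ]
        by_cases h : pr j = true
        · rw [if_pos h, if_pos h, smul_inv_smul₀ (ne_of_gt hδ)]
          simp
        · simp only [h, if_false]
          simp only [Bool.not_eq_true] at h
          simp [h]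
      have hR : (Matrix.of fun j => if pr j then δ⁻¹ • (γ (s (π j) + δ) - γ (s (π j)))
            else if pr j then γ (s (π j)) + δ • (δ⁻¹ • (γ (s (π j) + δ) - γ (s (π j))))
            else γ (s (π j)))
          = (Matrix.of fun j => if pr j then
              δ⁻¹ • (γ (s (π j) + δ) - γ (s (π j))) else γ (s (π j))) := by
        ext j i
        by_cases h : pr j = true <;> simp [h]
      rw [hL, hfac, hR, hp]
    rw [hid] at hD
    have hmul : Ds * (δ ^ p * (Matrix.of fun j => if pr j then
          δ⁻¹ • (γ (s (π j) + δ) - γ (s (π j))) else γ (s (π j))).det)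
        = δ ^ p * (Ds * (Matrix.of fun j => if pr j then
          δ⁻¹ • (γ (s (π j) + δ) - γ (s (π j))) else γ (s (π j))).det) := by ring
    rw [hDs] at hmul ⊢
    rw [hmul] at hD
    nlinarith [pow_pos hδ p, hD, sq_nonneg (δ ^ p)]
  -- limit
  set B0 : Matrix (Fin 4) (Fin 4) ℝ :=
    Matrix.of fun j => if pr j then deriv γ (s (π j)) else γ (s (π j)) with hB0
  have h2 : Tendsto (fun δ : ℝ => (Matrix.of fun j => if pr j then
      δ⁻¹ • (γ (s (π j) + δ) - γ (s (π j))) else γ (s (π j))).det)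
      (nhdsWithin 0 (Set.Ioi 0)) (nhds B0.det) := by
    have hdet : Continuous fun M : Matrix (Fin 4) (Fin 4) ℝ => M.det :=
      Continuous.matrix_det continuous_id
    apply (hdet.tendsto B0).comp
    refine tendsto_pi_nhds.mpr ?_
    intro j
    show Tendsto (fun δ : ℝ => if pr j = true then δ⁻¹ • (γ (s (π j) + δ) - γ (s (π j)))
        else γ (s (π j))) (nhdsWithin 0 (Set.Ioi 0))
      (nhds (if pr j = true then deriv γ (s (π j)) else γ (s (π j))))
    by_cases h : pr j = true
    · simp only [h, if_true]
      set τ0 := s (π j) with hτ0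
      have hd : HasDerivAt γ (deriv γ τ0) τ0 :=
        ((hsmooth.differentiable (by simp)) τ0).hasDerivAt
      rw [hasDerivAt_iff_tendsto_slope] at hd
      have hmap : Tendsto (fun δ : ℝ => τ0 + δ) (nhdsWithin 0 (Set.Ioi 0))
          (nhdsWithin τ0 {τ0}ᶜ) := by
        apply tendsto_nhdsWithin_of_tendsto_nhds_of_eventually_within
        · have hT : Tendsto (fun δ : ℝ => τ0 + δ) (nhds 0) (nhds (τ0 + 0)) :=
            tendsto_const_nhds.add tendsto_id
          rw [add_zero] at hT
          exact hT.mono_left nhdsWithin_le_nhds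
        · filter_upwards [self_mem_nhdsWithin] with δ hδ
          simp only [Set.mem_compl_iff, Set.mem_singleton_iff]
          have hpos : (0:ℝ) < δ := hδ
          intro hh
          have : δ = 0 := by linarith
          linarith
      have := hd.comp hmap
      have heq : (slope γ τ0 ∘ fun δ : ℝ => τ0 + δ)
          = fun δ : ℝ => δ⁻¹ • (γ (τ0 + δ) - γ τ0) := by
        funext δ
        simp [slope, Function.comp, vsub_eq_sub]
      rw [heq] at this
      exact this
    · simp only [h, if_false]
      exact tendsto_const_nhds
  have h3 : 0 ≤ Ds * B0.det := by
    have hev : ∀ᶠ δ in nhdsWithin (0:ℝ) (Set.Ioi 0),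
        0 ≤ Ds * (Matrix.of fun j => if pr j then
          δ⁻¹ • (γ (s (π j) + δ) - γ (s (π j))) else γ (s (π j))).det := by
      filter_upwards [Ioo_mem_nhdsGT_of_mem (Set.mem_Ico.mpr ⟨le_refl 0, hgap⟩)] with δ hδ
      exact (h1 δ hδ.1 hδ.2).le
    exact ge_of_tendsto (tendsto_const_nhds.mul h2) hev
  have h4 : B0.det ≠ 0 := by
    apply conf_ne γ hsmooth hconv (fun j => s (π j)) (fun j => hsI (π j)) pr
    · intro a b hab
      simp only [Prod.mk.injEq] at hab
      by_contra hne
      rcases lt_or_gt_of_ne hne with h | h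
      · rcases hlex a b h with hππ | ⟨_, hpa, hpb⟩
        · exact absurd hab.1 (ne_of_lt (hs hππ))
        · rw [hpa, hpb] at hab; exact absurd hab.2 (by simp)
      · rcases hlex b a h with hππ | ⟨_, hpa, hpb⟩
        · exact absurd hab.1.symm (ne_of_lt (hs hππ))
        · rw [hpa, hpb] at hab; exact absurd hab.2 (by simp)
    · intro j hj
      obtain ⟨j', hπ', hpr'⟩ := hpartner j hj
      exact ⟨j', by rw [hπ'], hpr'⟩
  exact lt_of_le_of_ne h3 (Ne.symm (mul_ne_zero hDs0 h4))

end B0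

section Perc
variable (γ : ℝ → (Fin 4 → ℝ)) (s : Fin 4 → ℝ)

lemma perc (hsmooth : ContDiff ℝ (⊤ : ℕ∞) γ)
    (hconv : ∀ f : (Fin 4 → ℝ) →ₗ[ℝ] ℝ, f ≠ 0 →
      (∀ t ∈ Set.Icc (0:ℝ) 1, ∃ k : ℕ, iteratedDeriv k (fun u => f (γ u)) t ≠ 0) ∧
      ∀ (S : Finset ℝ) (ord : ℝ → ℕ),
        (∀ t ∈ S, t ∈ Set.Icc (0:ℝ) 1 ∧ 1 ≤ ord t ∧
          iteratedDeriv (ord t) (fun u => f (γ u)) t ≠ 0 ∧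
          ∀ j < ord t, iteratedDeriv j (fun u => f (γ u)) t = 0) →
        ∑ t ∈ S, ord t ≤ 3)
    (hs : StrictMono s) (hs0 : 0 < s 0) (hs1 : s 3 < 1)
    (c : Fin 4 → Fin 8) (hc : StrictMono c) :
    ∀ᶠ ε in nhdsWithin (0:ℝ) (Set.Ioi 0),
      0 < (Matrix.of fun j => γ (s j)).det *
        (Matrix.of fun j => if (c j).val % 2 = 0 then γ (s (half (c j)))
          else γ (s (half (c j))) + ε • deriv γ (s (half (c j)))).det := by
  classical
  set π : Fin 4 → Fin 4 := fun j => half (c j) with hπdef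
  set b : Fin 4 → Bool := fun j => decide ((c j).val % 2 = 1) with hbdef
  set pr : Fin 4 → Bool :=
    fun j => b j && decide (∃ j', π j' = π j ∧ b j' = false) with hprdef
  have hlexb : ∀ j j', j < j' →
      π j < π j' ∨ (π j = π j' ∧ b j = false ∧ b j' = true) := by
    intro j j' h
    have hcc : (c j).val < (c j').val := hc h
    have h8 := (c j).isLt
    have h8' := (c j').isLt
    rcases Nat.lt_or_ge ((c j).val / 2) ((c j').val / 2) with hlt | hge
    · left
      show half (c j) < half (c j')
      simp only [half, Fin.mk_lt_mk]
      exact hlt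
    · right
      have heq : (c j).val / 2 = (c j').val / 2 := by omega
      have hm0 : (c j).val % 2 = 0 := by omega
      have hm1 : (c j').val % 2 = 1 := by omega
      refine ⟨?_, ?_, ?_⟩
      · show half (c j) = half (c j')
        simp only [half, Fin.mk.injEq]
        exact heq
      · simp only [hbdef, decide_eq_false_iff_not]
        omega
      · simp only [hbdef, decide_eq_true_eq]
        exact hm1
  have hdb : ∀ j, pr j = true → b j = true := by
    intro j hj
    simp only [hprdef, Bool.and_eq_true] at hj
    exact hj.1
  have hpartnerb : ∀ j, pr j = true → ∃ j', π j' = π j ∧ b j' = false := by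
    intro j hj
    simp only [hprdef, Bool.and_eq_true, decide_eq_true_eq] at hj
    exact hj.2
  have hlexpr : ∀ j j', j < j' →
      π j < π j' ∨ (π j = π j' ∧ pr j = false ∧ pr j' = true) := by
    intro j j' h
    rcases hlexb j j' h with h1 | ⟨hππ, hbj, hbj'⟩
    · exact Or.inl h1
    · refine Or.inr ⟨hππ, ?_, ?_⟩
      · simp only [hprdef, hbj, Bool.false_and]
      · simp only [hprdef, hbj', Bool.true_and, decide_eq_true_eq]
        exact ⟨j, hππ, hbj⟩
  have hprpartner : ∀ j, pr j = true → ∃ j', π j' = π j ∧ pr j' = false := by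
    intro j hj
    obtain ⟨j', hπ', hb'⟩ := hpartnerb j hj
    exact ⟨j', hπ', by simp only [hprdef, hb', Bool.false_and]⟩
  have hB0 := B0_pos γ s hsmooth hconv hs hs0 hs1 π pr hlexpr hprpartner
  set Bm : ℝ → Matrix (Fin 4) (Fin 4) ℝ := fun ε => Matrix.of fun j =>
    if pr j then deriv γ (s (π j))
    else if b j then γ (s (π j)) + ε • deriv γ (s (π j)) else γ (s (π j)) with hBm
  have hcont : Continuous fun ε => (Bm ε).det := by
    apply Continuous.matrix_det
    apply continuous_pi
    intro j
    apply continuous_pi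
    intro i
    show Continuous fun ε =>
      (if pr j then deriv γ (s (π j))
        else if b j then γ (s (π j)) + ε • deriv γ (s (π j)) else γ (s (π j))) i
    by_cases hpr : pr j = true
    · simp only [hpr, if_true]
      exact continuous_const
    · simp only [hpr, if_false]
      by_cases hb : b j = true
      · simp only [hb, if_true, Pi.add_apply, Pi.smul_apply, smul_eq_mul]
        exact continuous_const.add (continuous_id.mul continuous_const)
      · simp only [hb, if_false]
        exact continuous_const
  have hBm0 : Bm 0 = Matrix.of fun j =>
      if pr j then deriv γ (s (π j)) else γ (s (π j)) := by
    ext j i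
    show (if pr j then deriv γ (s (π j))
      else if b j then γ (s (π j)) + (0:ℝ) • deriv γ (s (π j)) else γ (s (π j))) i
      = (if pr j then deriv γ (s (π j)) else γ (s (π j))) i
    by_cases hpr : pr j = true
    · simp [hpr]
    · by_cases hb : b j = true <;> simp [hpr, hb]
  have hev : ∀ᶠ ε in nhds (0:ℝ),
      0 < (Matrix.of fun j => γ (s j)).det * (Bm ε).det := by
    have hc2 : Continuous fun ε => (Matrix.of fun j => γ (s j)).det * (Bm ε).det :=
      continuous_const.mul hcont
    have h0 : 0 < (Matrix.of fun j => γ (s j)).det * (Bm 0).det := by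
      rw [hBm0]; exact hB0
    exact (hc2.tendsto 0).eventually (eventually_gt_nhds h0)
  filter_upwards [hev.filter_mono nhdsWithin_le_nhds, self_mem_nhdsWithin] with ε h1ε h2ε
  have hεpos : (0:ℝ) < ε := h2ε
  have hrow : (fun j => if (c j).val % 2 = 0 then γ (s (half (c j)))
        else γ (s (half (c j))) + ε • deriv γ (s (half (c j))))
      = fun j => if b j then γ (s (π j)) + ε • deriv γ (s (π j)) else γ (s (π j)) := by
    funext j
    by_cases h : (c j).val % 2 = 0
    · have hbf : b j = false := by
        simp only [hbdef, decide_eq_false_iff_not]; omega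
      rw [if_pos h, hbf]
      simp [hπdef]
    · have hbt : b j = true := by
        simp only [hbdef, decide_eq_true_eq]; omega
      rw [if_neg h, hbt]
      simp [hπdef]
  rw [hrow]
  have hfac := det_factor (fun i => γ (s i)) (fun i => deriv γ (s i)) π b pr hdb hpartnerb ε
  rw [hfac]
  have hZ : (Matrix.of fun j => if pr j then deriv γ (s (π j))
      else if b j then γ (s (π j)) + ε • deriv γ (s (π j)) else γ (s (π j))).det
      = (Bm ε).det := rfl
  rw [hZ]
  set Z := (Bm ε).det
  set q := (Finset.univ.filter fun j => pr j = true).card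
  have : (Matrix.of fun j => γ (s j)).det * (ε ^ q * Z)
      = ε ^ q * ((Matrix.of fun j => γ (s j)).det * Z) := by ring
  rw [this]
  exact mul_pos (pow_pos hεpos q) h1ε

end Perc

/-- For a smooth lift `γ` of a convex curve in `ℝP³` and any
`0 < s₁ < s₂ < s₃ < s₄ < 1`, there exist `g ∈ GL₄(ℝ)` and, for each `i`, two vectors
`uᵢ, vᵢ` spanning `span {γ(sᵢ), γ′(sᵢ)}`, so that the 4×8 matrix with columns
`g·u₁, g·v₁, …, g·u₄, g·v₄` has all its 4×4 minors strictly positive. -/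
theorem stmt3 (γ : ℝ → (Fin 4 → ℝ)) (hsmooth : ContDiff ℝ (⊤ : ℕ∞) γ)
    (hne : ∀ t ∈ Set.Icc (0:ℝ) 1, γ t ≠ 0)
    (hconv : ∀ f : (Fin 4 → ℝ) →ₗ[ℝ] ℝ, f ≠ 0 →
      (∀ t ∈ Set.Icc (0:ℝ) 1, ∃ k : ℕ, iteratedDeriv k (fun u => f (γ u)) t ≠ 0) ∧
      ∀ (S : Finset ℝ) (ord : ℝ → ℕ),
        (∀ t ∈ S, t ∈ Set.Icc (0:ℝ) 1 ∧ 1 ≤ ord t ∧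
          iteratedDeriv (ord t) (fun u => f (γ u)) t ≠ 0 ∧
          ∀ j < ord t, iteratedDeriv j (fun u => f (γ u)) t = 0) →
        ∑ t ∈ S, ord t ≤ 3)
    (s : Fin 4 → ℝ) (hs : StrictMono s) (hs0 : 0 < s 0) (hs1 : s 3 < 1) :
    ∃ (g : Matrix (Fin 4) (Fin 4) ℝ) (u v : Fin 4 → (Fin 4 → ℝ)),
      IsUnit g ∧
      (∀ i : Fin 4, Submodule.span ℝ {u i, v i}
          = Submodule.span ℝ {γ (s i), deriv γ (s i)}) ∧
      ∀ c : Fin 4 → Fin 8, StrictMono c →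
        0 < ((Matrix.of fun (r : Fin 4) (j : Fin 8) =>
          if j.val % 2 = 0 then g.mulVec (u ⟨j.val / 2, by have := j.isLt; omega⟩) r
          else g.mulVec (v ⟨j.val / 2, by have := j.isLt; omega⟩) r).submatrix id c).det := by
  classical
  have hsI : ∀ i, s i ∈ Set.Icc (0:ℝ) 1 := by
    intro i
    constructor
    · exact (hs0.trans_le (hs.monotone (Fin.zero_le i))).le
    · exact ((hs.monotone (Fin.le_last i)).trans_lt hs1).le
  set Ds := (Matrix.of fun j => γ (s j)).det with hDsdef
  have hDpos := D_pos γ s hsmooth hconv hs hsI s hs hsI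
  have hDs0 : Ds ≠ 0 := by
    intro h
    rw [hDsdef] at h
    rw [h] at hDpos
    simp at hDpos
  have hall : ∀ᶠ ε in nhdsWithin (0:ℝ) (Set.Ioi 0),
      (0 < ε) ∧ ∀ c : Fin 4 → Fin 8, StrictMono c →
        0 < Ds * (Matrix.of fun j => if (c j).val % 2 = 0 then γ (s (half (c j)))
          else γ (s (half (c j))) + ε • deriv γ (s (half (c j)))).det := by
    refine Filter.Eventually.and ?_ ?_
    · filter_upwards [self_mem_nhdsWithin] with ε hε
      exact hε
    · rw [Filter.eventually_all]
      intro c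
      by_cases hc : StrictMono c
      · filter_upwards [perc γ s hsmooth hconv hs hs0 hs1 c hc] with ε hε _
        exact hε
      · filter_upwards with ε h
        exact absurd h hc
  obtain ⟨ε, hεpos, hεall⟩ := hall.exists
  refine ⟨Matrix.diagonal (fun i => if i = 0 then Ds else 1), (fun i => γ (s i)),
    (fun i => γ (s i) + ε • deriv γ (s i)), ?_, ?_, ?_⟩
  · rw [Matrix.isUnit_iff_isUnit_det, Matrix.det_diagonal, Fin.prod_univ_four,
      if_pos rfl, if_neg (by decide : ¬(1:Fin 4) = 0), if_neg (by decide : ¬(2:Fin 4) = 0),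
      if_neg (by decide : ¬(3:Fin 4) = 0), mul_one, mul_one, mul_one]
    exact isUnit_iff_ne_zero.mpr hDs0
  · intro i
    apply le_antisymm
    · rw [Submodule.span_le]
      intro z hz
      simp only [Set.mem_insert_iff, Set.mem_singleton_iff] at hz
      rcases hz with rfl | rfl
      · exact Submodule.subset_span (Set.mem_insert _ _)
      · apply Submodule.add_mem
        · exact Submodule.subset_span (Set.mem_insert _ _)
        · exact Submodule.smul_mem _ _
            (Submodule.subset_span (Set.mem_insert_of_mem _ rfl))
    · rw [Submodule.span_le]
      intro z hz
      simp only [Set.mem_insert_iff, Set.mem_singleton_iff] at hz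
      rcases hz with rfl | rfl
      · exact Submodule.subset_span (Set.mem_insert _ _)
      · have hrec : deriv γ (s i) = ε⁻¹ • ((γ (s i) + ε • deriv γ (s i)) - γ (s i)) := by
          rw [add_sub_cancel_left, inv_smul_smul₀ (ne_of_gt hεpos)]
        rw [hrec]
        apply Submodule.smul_mem
        apply Submodule.sub_mem
        · exact Submodule.subset_span (Set.mem_insert_of_mem _ rfl)
        · exact Submodule.subset_span (Set.mem_insert _ _)
  · intro c hc
    have hpos := hεall c hc
    set g : Matrix (Fin 4) (Fin 4) ℝ :=
      Matrix.diagonal (fun i => if i = 0 then Ds else 1) with hg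
    set N : Matrix (Fin 4) (Fin 4) ℝ := Matrix.of fun k j =>
      (if (c j).val % 2 = 0 then γ (s (half (c j)))
        else γ (s (half (c j))) + ε • deriv γ (s (half (c j)))) k with hN
    have hGN : ((Matrix.of fun (r : Fin 4) (j : Fin 8) =>
        if j.val % 2 = 0 then g.mulVec ((fun i => γ (s i)) ⟨j.val / 2, by have := j.isLt; omega⟩) r
        else g.mulVec ((fun i => γ (s i) + ε • deriv γ (s i)) ⟨j.val / 2, by have := j.isLt; omega⟩) r).submatrix id c)
        = g * N := by
      ext r j
      simp only [Matrix.submatrix_apply, id_eq, Matrix.of_apply, Matrix.mul_apply,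
        Matrix.mulVec, dotProduct, hN]
      by_cases h : (c j).val % 2 = 0
      · rw [if_pos h]
        apply Finset.sum_congr rfl
        intro k _
        rw [if_pos h]
        rfl
      · rw [if_neg h]
        apply Finset.sum_congr rfl
        intro k _
        rw [if_neg h]
        rfl
    rw [hGN, Matrix.det_mul]
    have hdiag : g.det = Ds := by
      rw [hg, Matrix.det_diagonal, Fin.prod_univ_four,
        if_pos rfl, if_neg (by decide : ¬(1:Fin 4) = 0), if_neg (by decide : ¬(2:Fin 4) = 0),
        if_neg (by decide : ¬(3:Fin 4) = 0), mul_one, mul_one, mul_one]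
    have hNdet : N.det = (Matrix.of fun j => if (c j).val % 2 = 0 then γ (s (half (c j)))
        else γ (s (half (c j))) + ε • deriv γ (s (half (c j)))).det := by
      have hNT : N = (Matrix.of fun j => if (c j).val % 2 = 0 then γ (s (half (c j)))
          else γ (s (half (c j))) + ε • deriv γ (s (half (c j))))ᵀ := rfl
      rw [hNT, Matrix.det_transpose]
    rw [hdiag, hNdet]
    exact hpos
end

section
/- Let X be a totally positive 4×4 real matrix. Then D(X) > 0, where D(X) := (Δ₁₃,₁₂Δ₂₄,₃₄ − Δ₂₄,₁₂Δ₁₃,₃₄ − Δ₁₄,₁₂Δ₂₃,₃₄ + Δ₂₃,₁₂Δ₁₄,₃₄)² − 4(Δ₁₃,₁₂Δ₁₄,₃₄ − Δ₁₄,₁₂Δ₁₃,₃₄)(Δ₂₃,₁₂Δ₂₄,₃₄ − Δ₂₄,₁₂Δ₂₃,₃₄), all minors taken of X. -/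
set_option maxHeartbeats 2000000

/-- A 4×4 real matrix is totally positive if every minor (determinant of every square
submatrix given by increasing choices of rows and columns) is strictly positive. -/
def TotallyPositive (X : Matrix (Fin 4) (Fin 4) ℝ) : Prop :=
  ∀ (k : ℕ) (r c : Fin k → Fin 4), StrictMono r → StrictMono c →
    0 < (X.submatrix r c).det

/-- `Δ_{i₁i₂,j₁j₂}`: the 2×2 minor of `X` with rows `i₁ < i₂` and columns `j₁ < j₂`
(indices here are 0-based). -/
def minor2 (X : Matrix (Fin 4) (Fin 4) ℝ) (i₁ i₂ j₁ j₂ : Fin 4) : ℝ :=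
  X i₁ j₁ * X i₂ j₂ - X i₁ j₂ * X i₂ j₁

/-- The discriminant `D(X)` built from the 2×2 minors of `X` (1-based minors
`Δ_{13,12}, Δ_{24,34}`, etc. correspond to 0-based indices below). -/
def Dq (X : Matrix (Fin 4) (Fin 4) ℝ) : ℝ :=
  (minor2 X 0 2 0 1 * minor2 X 1 3 2 3 - minor2 X 1 3 0 1 * minor2 X 0 2 2 3
    - minor2 X 0 3 0 1 * minor2 X 1 2 2 3 + minor2 X 1 2 0 1 * minor2 X 0 3 2 3) ^ 2
  - 4 * (minor2 X 0 2 0 1 * minor2 X 0 3 2 3 - minor2 X 0 3 0 1 * minor2 X 0 2 2 3)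
      * (minor2 X 1 2 0 1 * minor2 X 1 3 2 3 - minor2 X 1 3 0 1 * minor2 X 1 2 2 3)

private lemma sm1 (i : Fin 4) : StrictMono ![i] :=
  Subsingleton.strictMono _

private lemma sm2 {i1 i2 : Fin 4} (h : i1 < i2) : StrictMono ![i1, i2] := by
  rw [Fin.strictMono_iff_lt_succ]
  intro i
  fin_cases i
  simpa using h

private lemma sm3 {i1 i2 i3 : Fin 4} (h12 : i1 < i2) (h23 : i2 < i3) :
    StrictMono ![i1, i2, i3] := by
  rw [Fin.strictMono_iff_lt_succ]
  intro i
  fin_cases i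
  · simpa using h12
  · simpa using h23

private lemma pos1 {X : Matrix (Fin 4) (Fin 4) ℝ} (hX : TotallyPositive X)
    (i j : Fin 4) : 0 < X i j := by
  have h := hX 1 ![i] ![j] (sm1 i) (sm1 j)
  rw [Matrix.det_fin_one] at h
  simpa using h

private lemma pos2 {X : Matrix (Fin 4) (Fin 4) ℝ} (hX : TotallyPositive X)
    {i1 i2 j1 j2 : Fin 4} (hi : i1 < i2) (hj : j1 < j2) :
    0 < X i1 j1 * X i2 j2 - X i1 j2 * X i2 j1 := by
  have h := hX 2 ![i1, i2] ![j1, j2] (sm2 hi) (sm2 hj)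
  rw [Matrix.det_fin_two] at h
  simpa using h

private lemma pos3 {X : Matrix (Fin 4) (Fin 4) ℝ} (hX : TotallyPositive X)
    {i1 i2 i3 j1 j2 j3 : Fin 4} (hi1 : i1 < i2) (hi2 : i2 < i3)
    (hj1 : j1 < j2) (hj2 : j2 < j3) :
    0 < X i1 j1 * X i2 j2 * X i3 j3 - X i1 j1 * X i2 j3 * X i3 j2
      - X i1 j2 * X i2 j1 * X i3 j3 + X i1 j2 * X i2 j3 * X i3 j1
      + X i1 j3 * X i2 j1 * X i3 j2 - X i1 j3 * X i2 j2 * X i3 j1 := by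
  have h := hX 3 ![i1, i2, i3] ![j1, j2, j3] (sm3 hi1 hi2) (sm3 hj1 hj2)
  rw [Matrix.det_fin_three] at h
  simpa using h

/-- From `q * m = r` with `r > 0` and `m > 0`, conclude `q > 0`. -/
private lemma cert_pos {q m r : ℝ} (h : q * m = r) (hr : 0 < r) (hm : 0 < m) :
    0 < q := by
  nlinarith

/-- From `d * a² = s² + r` with `r > 0` and `a > 0`, conclude `d > 0`. -/
private lemma main_pos {d a s r : ℝ} (h : d * a ^ 2 = s ^ 2 + r) (hr : 0 < r)
    (ha : 0 < a) : 0 < d := by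
  nlinarith [sq_nonneg s, pow_pos ha 2]

/-- For every totally positive 4×4 real matrix `X`, `D(X) > 0`. -/
theorem stmt4 (X : Matrix (Fin 4) (Fin 4) ℝ) (hX : TotallyPositive X) :
    0 < Dq X := by
  have h01 : (0 : Fin 4) < 1 := by decide
  have h12 : (1 : Fin 4) < 2 := by decide
  have h23 : (2 : Fin 4) < 3 := by decide
  have h02 : (0 : Fin 4) < 2 := by decide
  have h13 : (1 : Fin 4) < 3 := by decide
  -- entries
  have e10 : 0 < X 1 0 := pos1 hX 1 0
  have e12 : 0 < X 1 2 := pos1 hX 1 2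
  have e21 : 0 < X 2 1 := pos1 hX 2 1
  have e23 : 0 < X 2 3 := pos1 hX 2 3
  -- 2x2 minors
  have hA01 : 0 < (X 0 0 * X 1 1 - X 0 1 * X 1 0) := pos2 hX h01 h01
  have hA23 : 0 < (X 2 0 * X 3 1 - X 2 1 * X 3 0) := pos2 hX h23 h01
  have hA12 : 0 < (X 1 0 * X 2 1 - X 1 1 * X 2 0) := pos2 hX h12 h01
  have hM1202 : 0 < (X 1 0 * X 2 2 - X 1 2 * X 2 0) := pos2 hX h12 h02
  have hM1223 : 0 < (X 1 2 * X 2 3 - X 1 3 * X 2 2) := pos2 hX h12 h23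
  have hM1213 : 0 < (X 1 1 * X 2 3 - X 1 3 * X 2 1) := pos2 hX h12 h13
  -- 3x3 minors
  have hD3a : 0 < (X 1 0 * X 2 2 * X 3 3 - X 1 0 * X 2 3 * X 3 2 - X 1 2 * X 2 0 * X 3 3 + X 1 2 * X 2 3 * X 3 0 + X 1 3 * X 2 0 * X 3 2 - X 1 3 * X 2 2 * X 3 0) := pos3 hX h12 h23 h02 h23
  have hD3b : 0 < (X 1 0 * X 2 1 * X 3 2 - X 1 0 * X 2 2 * X 3 1 - X 1 1 * X 2 0 * X 3 2 + X 1 1 * X 2 2 * X 3 0 + X 1 2 * X 2 0 * X 3 1 - X 1 2 * X 2 1 * X 3 0) := pos3 hX h12 h23 h01 h12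
  have hD3c : 0 < (X 0 0 * X 1 1 * X 2 3 - X 0 0 * X 1 3 * X 2 1 - X 0 1 * X 1 0 * X 2 3 + X 0 1 * X 1 3 * X 2 0 + X 0 3 * X 1 0 * X 2 1 - X 0 3 * X 1 1 * X 2 0) := pos3 hX h01 h12 h01 h13
  have hD3d : 0 < (X 0 1 * X 1 2 * X 2 3 - X 0 1 * X 1 3 * X 2 2 - X 0 2 * X 1 1 * X 2 3 + X 0 2 * X 1 3 * X 2 1 + X 0 3 * X 1 1 * X 2 2 - X 0 3 * X 1 2 * X 2 1) := pos3 hX h01 h12 h12 h23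
  -- Q > 0 via the certificate  Q·Δ(12,02) = X₁₂·Δ(123,023)·Δ(12,01) + X₁₀·Δ(123,012)·Δ(12,23)
  have hQcert : (((X 1 0 * X 2 1 - X 1 1 * X 2 0) * (X 1 2 * X 3 3 - X 1 3 * X 3 2) - (X 1 0 * X 3 1 - X 1 1 * X 3 0) * (X 1 2 * X 2 3 - X 1 3 * X 2 2))) * ((X 1 0 * X 2 2 - X 1 2 * X 2 0))
      = X 1 2 * (X 1 0 * X 2 2 * X 3 3 - X 1 0 * X 2 3 * X 3 2 - X 1 2 * X 2 0 * X 3 3 + X 1 2 * X 2 3 * X 3 0 + X 1 3 * X 2 0 * X 3 2 - X 1 3 * X 2 2 * X 3 0) * (X 1 0 * X 2 1 - X 1 1 * X 2 0) + X 1 0 * (X 1 0 * X 2 1 * X 3 2 - X 1 0 * X 2 2 * X 3 1 - X 1 1 * X 2 0 * X 3 2 + X 1 1 * X 2 2 * X 3 0 + X 1 2 * X 2 0 * X 3 1 - X 1 2 * X 2 1 * X 3 0) * (X 1 2 * X 2 3 - X 1 3 * X 2 2) := by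
    ring
  have hQ : 0 < ((X 1 0 * X 2 1 - X 1 1 * X 2 0) * (X 1 2 * X 3 3 - X 1 3 * X 3 2) - (X 1 0 * X 3 1 - X 1 1 * X 3 0) * (X 1 2 * X 2 3 - X 1 3 * X 2 2)) :=
    cert_pos hQcert
      (add_pos (mul_pos (mul_pos e12 hD3a) hA12)
        (mul_pos (mul_pos e10 hD3b) hM1223)) hM1202
  -- P' > 0 via the certificate  P'·Δ(12,13) = X₂₁·Δ(012,013)·Δ(12,23) + X₂₃·Δ(012,123)·Δ(12,01)
  have hPpcert : (((X 0 0 * X 2 1 - X 0 1 * X 2 0) * (X 1 2 * X 2 3 - X 1 3 * X 2 2) - (X 1 0 * X 2 1 - X 1 1 * X 2 0) * (X 0 2 * X 2 3 - X 0 3 * X 2 2))) * ((X 1 1 * X 2 3 - X 1 3 * X 2 1))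
      = X 2 1 * (X 0 0 * X 1 1 * X 2 3 - X 0 0 * X 1 3 * X 2 1 - X 0 1 * X 1 0 * X 2 3 + X 0 1 * X 1 3 * X 2 0 + X 0 3 * X 1 0 * X 2 1 - X 0 3 * X 1 1 * X 2 0) * (X 1 2 * X 2 3 - X 1 3 * X 2 2) + X 2 3 * (X 0 1 * X 1 2 * X 2 3 - X 0 1 * X 1 3 * X 2 2 - X 0 2 * X 1 1 * X 2 3 + X 0 2 * X 1 3 * X 2 1 + X 0 3 * X 1 1 * X 2 2 - X 0 3 * X 1 2 * X 2 1) * (X 1 0 * X 2 1 - X 1 1 * X 2 0) := by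
    ring
  have hPp : 0 < ((X 0 0 * X 2 1 - X 0 1 * X 2 0) * (X 1 2 * X 2 3 - X 1 3 * X 2 2) - (X 1 0 * X 2 1 - X 1 1 * X 2 0) * (X 0 2 * X 2 3 - X 0 3 * X 2 2)) :=
    cert_pos hPpcert
      (add_pos (mul_pos (mul_pos e21 hD3c) hM1223)
        (mul_pos (mul_pos e23 hD3d) hA12)) hM1213
  -- the main identity:
  -- Dq X · Δ(12,01)² = (S·Δ(12,01) − 2Q·Δ(02,01))² + 4·Δ(01,01)·Δ(23,01)·Q·P'
  have hmain : Dq X * ((X 1 0 * X 2 1 - X 1 1 * X 2 0)) ^ 2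
      = (((X 0 0 * X 2 1 - X 0 1 * X 2 0) * (X 1 2 * X 3 3 - X 1 3 * X 3 2) - (X 1 0 * X 3 1 - X 1 1 * X 3 0) * (X 0 2 * X 2 3 - X 0 3 * X 2 2) - (X 0 0 * X 3 1 - X 0 1 * X 3 0) * (X 1 2 * X 2 3 - X 1 3 * X 2 2) + (X 1 0 * X 2 1 - X 1 1 * X 2 0) * (X 0 2 * X 3 3 - X 0 3 * X 3 2)) * (X 1 0 * X 2 1 - X 1 1 * X 2 0) - 2 * (((X 1 0 * X 2 1 - X 1 1 * X 2 0) * (X 1 2 * X 3 3 - X 1 3 * X 3 2) - (X 1 0 * X 3 1 - X 1 1 * X 3 0) * (X 1 2 * X 2 3 - X 1 3 * X 2 2))) * (X 0 0 * X 2 1 - X 0 1 * X 2 0)) ^ 2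
        + 4 * ((X 0 0 * X 1 1 - X 0 1 * X 1 0) * ((X 2 0 * X 3 1 - X 2 1 * X 3 0) * ((((X 1 0 * X 2 1 - X 1 1 * X 2 0) * (X 1 2 * X 3 3 - X 1 3 * X 3 2) - (X 1 0 * X 3 1 - X 1 1 * X 3 0) * (X 1 2 * X 2 3 - X 1 3 * X 2 2))) * (((X 0 0 * X 2 1 - X 0 1 * X 2 0) * (X 1 2 * X 2 3 - X 1 3 * X 2 2) - (X 1 0 * X 2 1 - X 1 1 * X 2 0) * (X 0 2 * X 2 3 - X 0 3 * X 2 2)))))) := by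
    simp only [Dq, minor2]
    ring
  exact main_pos hmain
    (by positivity)
    hA12
end

section
/- Let X be a totally positive 4×4 real matrix and write Δ_{I,J} for its 2×2 minors. Then the system of two equations Δ₁₃,₁₂·xy + Δ₁₄,₁₂·x + Δ₂₃,₁₂·y + Δ₂₄,₁₂ = 0 and Δ₁₃,₃₄·xy + Δ₁₄,₃₄·x + Δ₂₃,₃₄·y + Δ₂₄,₃₄ = 0 has two distinct real solutions, i.e., there exist pairs (x₁,y₁) ≠ (x₂,y₂) of real numbers each satisfying both equations. -/
/-- Ratio-chaining lemma: transitivity of positive cross-differences. -/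
lemma chain3 {a₁ b₁ a₂ b₂ a₃ b₃ : ℝ} (hb₁ : 0 < b₁) (hb₂ : 0 < b₂) (hb₃ : 0 < b₃)
    (h₁₂ : 0 < a₁ * b₂ - b₁ * a₂) (h₂₃ : 0 < a₂ * b₃ - b₂ * a₃) :
    0 < a₁ * b₃ - b₁ * a₃ := by
  have key : b₂ * (a₁ * b₃ - b₁ * a₃)
      = b₃ * (a₁ * b₂ - b₁ * a₂) + b₁ * (a₂ * b₃ - b₂ * a₃) := by ring
  nlinarith [mul_pos hb₃ h₁₂, mul_pos hb₁ h₂₃]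

/-- The quadratic-formula root. -/
lemma quad_root (a b c s : ℝ) (ha : a ≠ 0) (hs : s ^ 2 = b ^ 2 - 4 * a * c) :
    a * ((-b + s) / (2 * a)) ^ 2 + b * ((-b + s) / (2 * a)) + c = 0 := by
  field_simp
  linear_combination hs

/-- From a root of the resultant quadratic with nonvanishing denominator, build a
solution of the bilinear system. -/
lemma mk_sol (A B C D A' B' C' D' x : ℝ)
    (hroot : (A * B' - A' * B) * x ^ 2 + (A * D' + C * B' - A' * D - C' * B) * x
      + (C * D' - C' * D) = 0)
    (hden : A * x + C ≠ 0) :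
    ∃ y, A * (x * y) + B * x + C * y + D = 0 ∧ A' * (x * y) + B' * x + C' * y + D' = 0 := by
  refine ⟨-(B * x + D) / (A * x + C), ?_, ?_⟩
  · field_simp
    ring
  · have hden' : x * A + C ≠ 0 := by rwa [mul_comm]
    field_simp
    linear_combination hroot

/-- Pure real-algebra core: the bilinear system with positivity constraints has two
distinct solutions. -/
lemma quadratic_system (A B C D A' B' C' D' : ℝ)
    (hA : 0 < A)
    (hu : 0 < A * C' - C * A')
    (hK2 : 0 < A * B' - B * A')
    (hP : 0 < A * D - B * C) :
    ∃ x₁ y₁ x₂ y₂ : ℝ, (x₁, y₁) ≠ (x₂, y₂) ∧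
      (A * (x₁ * y₁) + B * x₁ + C * y₁ + D = 0) ∧
      (A' * (x₁ * y₁) + B' * x₁ + C' * y₁ + D' = 0) ∧
      (A * (x₂ * y₂) + B * x₂ + C * y₂ + D = 0) ∧
      (A' * (x₂ * y₂) + B' * x₂ + C' * y₂ + D' = 0) := by
  set K2 := A * B' - B * A' with hK2def
  set K1 := A * D' + C * B' - A' * D - C' * B with hK1def
  set K0 := C * D' - C' * D with hK0def
  have hK2ne : K2 ≠ 0 := ne_of_gt hK2
  have ht : K2 * C ^ 2 - K1 * C * A + K0 * A ^ 2
      = -((A * C' - C * A') * (A * D - B * C)) := by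
    rw [hK2def, hK1def, hK0def]; ring
  have htneg : K2 * C ^ 2 - K1 * C * A + K0 * A ^ 2 < 0 := by
    rw [ht]
    have := mul_pos hu hP
    linarith
  have hd : 0 < K1 ^ 2 - 4 * K2 * K0 := by
    nlinarith [sq_nonneg (2 * K2 * C - K1 * A), mul_pos hK2 (show 0 < -(K2 * C ^ 2 - K1 * C * A + K0 * A ^ 2) by linarith), mul_pos hA hA]
  set s := Real.sqrt (K1 ^ 2 - 4 * K2 * K0) with hsdef
  have hs2 : s ^ 2 = K1 ^ 2 - 4 * K2 * K0 := Real.sq_sqrt hd.le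
  have hspos : 0 < s := Real.sqrt_pos.mpr hd
  set x₁ := (-K1 + s) / (2 * K2) with hx1def
  set x₂ := (-K1 + -s) / (2 * K2) with hx2def
  have hr1 : K2 * x₁ ^ 2 + K1 * x₁ + K0 = 0 := quad_root K2 K1 K0 s hK2ne hs2
  have hr2 : K2 * x₂ ^ 2 + K1 * x₂ + K0 = 0 :=
    quad_root K2 K1 K0 (-s) hK2ne (by rw [neg_pow]; simpa using hs2)
  have hxne : x₁ ≠ x₂ := by
    intro h
    rw [hx1def, hx2def, div_eq_div_iff (by positivity) (by positivity)] at h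
    have : s = 0 := by nlinarith
    linarith
  have hden : ∀ x : ℝ, K2 * x ^ 2 + K1 * x + K0 = 0 → A * x + C ≠ 0 := by
    intro x hroot h
    have hC : C = -(A * x) := by linarith
    have : K2 * C ^ 2 - K1 * C * A + K0 * A ^ 2 = 0 := by
      rw [hC]; linear_combination A ^ 2 * hroot
    linarith
  obtain ⟨y₁, hy₁, hy₁'⟩ := mk_sol A B C D A' B' C' D' x₁ (by linear_combination hr1)
    (hden x₁ hr1)
  obtain ⟨y₂, hy₂, hy₂'⟩ := mk_sol A B C D A' B' C' D' x₂ (by linear_combination hr2)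
    (hden x₂ hr2)
  exact ⟨x₁, y₁, x₂, y₂, by simp only [ne_eq, Prod.mk.injEq, not_and]; exact fun h _ => hxne h,
    hy₁, hy₁', hy₂, hy₂'⟩

/-- For a totally positive 4×4 real matrix `X`, the system
`Δ₁₃,₁₂ xy + Δ₁₄,₁₂ x + Δ₂₃,₁₂ y + Δ₂₄,₁₂ = 0` and
`Δ₁₃,₃₄ xy + Δ₁₄,₃₄ x + Δ₂₃,₃₄ y + Δ₂₄,₃₄ = 0`
has two distinct real solutions. -/
theorem stmt7 (X : Matrix (Fin 4) (Fin 4) ℝ) (hX : TotallyPositive X) :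
    ∃ x₁ y₁ x₂ y₂ : ℝ, (x₁, y₁) ≠ (x₂, y₂) ∧
      (minor2 X 0 2 0 1 * (x₁ * y₁) + minor2 X 0 3 0 1 * x₁
        + minor2 X 1 2 0 1 * y₁ + minor2 X 1 3 0 1 = 0) ∧
      (minor2 X 0 2 2 3 * (x₁ * y₁) + minor2 X 0 3 2 3 * x₁
        + minor2 X 1 2 2 3 * y₁ + minor2 X 1 3 2 3 = 0) ∧
      (minor2 X 0 2 0 1 * (x₂ * y₂) + minor2 X 0 3 0 1 * x₂
        + minor2 X 1 2 0 1 * y₂ + minor2 X 1 3 0 1 = 0) ∧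
      (minor2 X 0 2 2 3 * (x₂ * y₂) + minor2 X 0 3 2 3 * x₂
        + minor2 X 1 2 2 3 * y₂ + minor2 X 1 3 2 3 = 0) := by
  -- positivity of entries
  have he20 : 0 < X 2 0 := by
    have h := hX 1 ![2] ![0] (by decide) (by decide); rw [Matrix.det_fin_one] at h; simpa using h
  have he23 : 0 < X 2 3 := by
    have h := hX 1 ![2] ![3] (by decide) (by decide); rw [Matrix.det_fin_one] at h; simpa using h
  have he00 : 0 < X 0 0 := by
    have h := hX 1 ![0] ![0] (by decide) (by decide); rw [Matrix.det_fin_one] at h; simpa using h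
  have he03 : 0 < X 0 3 := by
    have h := hX 1 ![0] ![3] (by decide) (by decide); rw [Matrix.det_fin_one] at h; simpa using h
  -- positivity of 2x2 minors (concrete instances)
  have hm2 : ∀ i₁ i₂ j₁ j₂ : Fin 4, StrictMono ![i₁, i₂] → StrictMono ![j₁, j₂] →
      0 < minor2 X i₁ i₂ j₁ j₂ := by
    intro i₁ i₂ j₁ j₂ hr hc
    have h := hX 2 ![i₁, i₂] ![j₁, j₂] hr hc
    rw [Matrix.det_fin_two] at h; simpa [minor2] using h
  -- b-minors for the u-chain (rows 1,2)
  have hb1 : 0 < minor2 X 1 2 0 1 := hm2 1 2 0 1 (by decide) (by decide)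
  have hb2 : 0 < minor2 X 1 2 0 2 := hm2 1 2 0 2 (by decide) (by decide)
  have hb3 : 0 < minor2 X 1 2 0 3 := hm2 1 2 0 3 (by decide) (by decide)
  have hb4 : 0 < minor2 X 1 2 1 3 := hm2 1 2 1 3 (by decide) (by decide)
  have hb5 : 0 < minor2 X 1 2 2 3 := hm2 1 2 2 3 (by decide) (by decide)
  -- b-minors for the K2-chain (rows 0,3)
  have hc1 : 0 < minor2 X 0 3 0 1 := hm2 0 3 0 1 (by decide) (by decide)
  have hc2 : 0 < minor2 X 0 3 0 2 := hm2 0 3 0 2 (by decide) (by decide)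
  have hc3 : 0 < minor2 X 0 3 0 3 := hm2 0 3 0 3 (by decide) (by decide)
  have hc4 : 0 < minor2 X 0 3 1 3 := hm2 0 3 1 3 (by decide) (by decide)
  have hc5 : 0 < minor2 X 0 3 2 3 := hm2 0 3 2 3 (by decide) (by decide)
  have hA : 0 < minor2 X 0 2 0 1 := hm2 0 2 0 1 (by decide) (by decide)
  have h0101 : 0 < minor2 X 0 1 0 1 := hm2 0 1 0 1 (by decide) (by decide)
  have h2301 : 0 < minor2 X 2 3 0 1 := hm2 2 3 0 1 (by decide) (by decide)
  -- positivity of needed 3x3 minors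
  have hd1 : 0 < (X.submatrix ![0,1,2] ![0,1,2]).det := hX 3 ![0,1,2] ![0,1,2] (by decide) (by decide)
  have hd2 : 0 < (X.submatrix ![0,1,2] ![0,2,3]).det := hX 3 ![0,1,2] ![0,2,3] (by decide) (by decide)
  have hd3 : 0 < (X.submatrix ![0,1,2] ![0,1,3]).det := hX 3 ![0,1,2] ![0,1,3] (by decide) (by decide)
  have hd4 : 0 < (X.submatrix ![0,1,2] ![1,2,3]).det := hX 3 ![0,1,2] ![1,2,3] (by decide) (by decide)
  have he1 : 0 < (X.submatrix ![0,2,3] ![0,1,2]).det := hX 3 ![0,2,3] ![0,1,2] (by decide) (by decide)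
  have he2 : 0 < (X.submatrix ![0,2,3] ![0,2,3]).det := hX 3 ![0,2,3] ![0,2,3] (by decide) (by decide)
  have he3 : 0 < (X.submatrix ![0,2,3] ![0,1,3]).det := hX 3 ![0,2,3] ![0,1,3] (by decide) (by decide)
  have he4 : 0 < (X.submatrix ![0,2,3] ![1,2,3]).det := hX 3 ![0,2,3] ![1,2,3] (by decide) (by decide)
  -- u-chain step identities (rows {0,2} vs {1,2}, shared bottom row 2)
  have hu12 : 0 < minor2 X 0 2 0 1 * minor2 X 1 2 0 2 - minor2 X 1 2 0 1 * minor2 X 0 2 0 2 := by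
    have : minor2 X 0 2 0 1 * minor2 X 1 2 0 2 - minor2 X 1 2 0 1 * minor2 X 0 2 0 2
        = X 2 0 * (X.submatrix ![0,1,2] ![0,1,2]).det := by
      rw [Matrix.det_fin_three]; simp [minor2]; ring
    rw [this]; exact mul_pos he20 hd1
  have hu23 : 0 < minor2 X 0 2 0 2 * minor2 X 1 2 0 3 - minor2 X 1 2 0 2 * minor2 X 0 2 0 3 := by
    have : minor2 X 0 2 0 2 * minor2 X 1 2 0 3 - minor2 X 1 2 0 2 * minor2 X 0 2 0 3
        = X 2 0 * (X.submatrix ![0,1,2] ![0,2,3]).det := by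
      rw [Matrix.det_fin_three]; simp [minor2]; ring
    rw [this]; exact mul_pos he20 hd2
  have hu34 : 0 < minor2 X 0 2 0 3 * minor2 X 1 2 1 3 - minor2 X 1 2 0 3 * minor2 X 0 2 1 3 := by
    have : minor2 X 0 2 0 3 * minor2 X 1 2 1 3 - minor2 X 1 2 0 3 * minor2 X 0 2 1 3
        = X 2 3 * (X.submatrix ![0,1,2] ![0,1,3]).det := by
      rw [Matrix.det_fin_three]; simp [minor2]; ring
    rw [this]; exact mul_pos he23 hd3
  have hu45 : 0 < minor2 X 0 2 1 3 * minor2 X 1 2 2 3 - minor2 X 1 2 1 3 * minor2 X 0 2 2 3 := by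
    have : minor2 X 0 2 1 3 * minor2 X 1 2 2 3 - minor2 X 1 2 1 3 * minor2 X 0 2 2 3
        = X 2 3 * (X.submatrix ![0,1,2] ![1,2,3]).det := by
      rw [Matrix.det_fin_three]; simp [minor2]; ring
    rw [this]; exact mul_pos he23 hd4
  have hu13 := chain3 hb1 hb2 hb3 hu12 hu23
  have hu14 := chain3 hb1 hb3 hb4 hu13 hu34
  have hu : 0 < minor2 X 0 2 0 1 * minor2 X 1 2 2 3 - minor2 X 1 2 0 1 * minor2 X 0 2 2 3 :=
    chain3 hb1 hb4 hb5 hu14 hu45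
  -- K2-chain step identities (rows {0,2} vs {0,3}, shared top row 0)
  have hk12 : 0 < minor2 X 0 2 0 1 * minor2 X 0 3 0 2 - minor2 X 0 3 0 1 * minor2 X 0 2 0 2 := by
    have : minor2 X 0 2 0 1 * minor2 X 0 3 0 2 - minor2 X 0 3 0 1 * minor2 X 0 2 0 2
        = X 0 0 * (X.submatrix ![0,2,3] ![0,1,2]).det := by
      rw [Matrix.det_fin_three]; simp [minor2]; ring
    rw [this]; exact mul_pos he00 he1
  have hk23 : 0 < minor2 X 0 2 0 2 * minor2 X 0 3 0 3 - minor2 X 0 3 0 2 * minor2 X 0 2 0 3 := by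
    have : minor2 X 0 2 0 2 * minor2 X 0 3 0 3 - minor2 X 0 3 0 2 * minor2 X 0 2 0 3
        = X 0 0 * (X.submatrix ![0,2,3] ![0,2,3]).det := by
      rw [Matrix.det_fin_three]; simp [minor2]; ring
    rw [this]; exact mul_pos he00 he2
  have hk34 : 0 < minor2 X 0 2 0 3 * minor2 X 0 3 1 3 - minor2 X 0 3 0 3 * minor2 X 0 2 1 3 := by
    have : minor2 X 0 2 0 3 * minor2 X 0 3 1 3 - minor2 X 0 3 0 3 * minor2 X 0 2 1 3
        = X 0 3 * (X.submatrix ![0,2,3] ![0,1,3]).det := by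
      rw [Matrix.det_fin_three]; simp [minor2]; ring
    rw [this]; exact mul_pos he03 he3
  have hk45 : 0 < minor2 X 0 2 1 3 * minor2 X 0 3 2 3 - minor2 X 0 3 1 3 * minor2 X 0 2 2 3 := by
    have : minor2 X 0 2 1 3 * minor2 X 0 3 2 3 - minor2 X 0 3 1 3 * minor2 X 0 2 2 3
        = X 0 3 * (X.submatrix ![0,2,3] ![1,2,3]).det := by
      rw [Matrix.det_fin_three]; simp [minor2]; ring
    rw [this]; exact mul_pos he03 he4
  have hk13 := chain3 hc1 hc2 hc3 hk12 hk23
  have hk14 := chain3 hc1 hc3 hc4 hk13 hk34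
  have hK2 : 0 < minor2 X 0 2 0 1 * minor2 X 0 3 2 3 - minor2 X 0 3 0 1 * minor2 X 0 2 2 3 :=
    chain3 hc1 hc4 hc5 hk14 hk45
  -- the 3-term Pluecker relation
  have hP : 0 < minor2 X 0 2 0 1 * minor2 X 1 3 0 1 - minor2 X 0 3 0 1 * minor2 X 1 2 0 1 := by
    have : minor2 X 0 2 0 1 * minor2 X 1 3 0 1 - minor2 X 0 3 0 1 * minor2 X 1 2 0 1
        = minor2 X 0 1 0 1 * minor2 X 2 3 0 1 := by
      simp [minor2]; ring
    rw [this]; exact mul_pos h0101 h2301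
  exact quadratic_system (minor2 X 0 2 0 1) (minor2 X 0 3 0 1) (minor2 X 1 2 0 1)
    (minor2 X 1 3 0 1) (minor2 X 0 2 2 3) (minor2 X 0 3 2 3) (minor2 X 1 2 2 3)
    (minor2 X 1 3 2 3) hA hu hK2 hP
end
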